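/- arXiv:2304.06582 — 4 statements merged into one kernel-verified Lean document; each statement's English description precedes it below -/
import Mathlib

section
/- Let r_max > 0 be finite and let a ≠ b be real numbers. Then the statistical distance between the uniform probability measure on [a − r_max, a + r_max] and the uniform probability measure on [b − r_max, b + r_max] is strictly positive. Consequently, the additive-noise random affine transformation cipher with uniform noise of finite amplitude r_max is never perfectly secure (perfectly indistinguishable) for distinct ciphertext means. -/
open MeasureTheory

/-- Statistical distance between two measures: the supremum of `|μ s - ν s|`
over measurable sets `s`.  For probability measures this equals half the
total variation norm `(1/2)·‖μ − ν‖_TV`. -/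
noncomputable def statDist {α : Type*} [MeasurableSpace α] (μ ν : Measure α) : ℝ :=
  sSup {d : ℝ | ∃ s : Set α, MeasurableSet s ∧ d = |(μ s).toReal - (ν s).toReal|}

/-- The uniform probability measure on the interval `[a, b]`. -/
noncomputable def unif (a b : ℝ) : Measure ℝ :=
  (ENNReal.ofReal (b - a))⁻¹ • volume.restrict (Set.Icc a b)

lemma unif_apply (a b : ℝ) (s : Set ℝ) (hs : MeasurableSet s) :
    unif a b s = (ENNReal.ofReal (b - a))⁻¹ * volume (s ∩ Set.Icc a b) := by
  simp [unif, Measure.restrict_apply hs]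

lemma unif_le_one (a b : ℝ) (h : a < b) (s : Set ℝ) (hs : MeasurableSet s) :
    unif a b s ≤ 1 := by
  rw [unif_apply a b s hs]
  have hvol : volume (s ∩ Set.Icc a b) ≤ ENNReal.ofReal (b - a) := by
    calc volume (s ∩ Set.Icc a b) ≤ volume (Set.Icc a b) :=
          measure_mono Set.inter_subset_right
      _ = ENNReal.ofReal (b - a) := Real.volume_Icc
  calc (ENNReal.ofReal (b - a))⁻¹ * volume (s ∩ Set.Icc a b)
      ≤ (ENNReal.ofReal (b - a))⁻¹ * ENNReal.ofReal (b - a) :=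
        mul_le_mul_right hvol _
    _ = 1 := ENNReal.inv_mul_cancel (by simp [h]) ENNReal.ofReal_ne_top

/-- For distinct centers `a ≠ b` and finite noise amplitude `r_max > 0`, the
statistical distance between the uniform measures on the intervals of radius
`r_max` centered at `a` and `b` is strictly positive: the additive-noise RT
cipher with finite uniform noise is never perfectly indistinguishable. -/
theorem additive_noise_RT_not_perfectly_secure (r_max : ℝ) (hr : 0 < r_max)
    (a b : ℝ) (hab : a ≠ b) :
    0 < statDist (unif (a - r_max) (a + r_max)) (unif (b - r_max) (b + r_max)) := by
  set μ := unif (a - r_max) (a + r_max) with hμ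
  set ν := unif (b - r_max) (b + r_max) with hν
  have ha : a - r_max < a + r_max := by linarith
  have hb : b - r_max < b + r_max := by linarith
  have h2r : (0:ℝ) < 2 * r_max := by linarith
  set s : Set ℝ := Set.Icc (a - r_max) (a + r_max) with hs
  have hsm : MeasurableSet s := measurableSet_Icc
  -- μ s = 1
  have hμs : μ s = 1 := by
    rw [hμ, unif_apply _ _ _ hsm, hs, Set.inter_self, Real.volume_Icc]
    rw [ENNReal.inv_mul_cancel (by simp; linarith) ENNReal.ofReal_ne_top]
  -- ν s < 1
  have hνs : ν s < 1 := by
    rw [hν, unif_apply _ _ _ hsm, hs, Set.Icc_inter_Icc, Real.volume_Icc]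
    have hdiff : min (a + r_max) (b + r_max) - max (a - r_max) (b - r_max)
        < (b + r_max) - (b - r_max) := by
      rcases hab.lt_or_gt with h | h
      · calc min (a + r_max) (b + r_max) - max (a - r_max) (b - r_max)
            ≤ (a + r_max) - (b - r_max) :=
              sub_le_sub (min_le_left _ _) (le_max_right _ _)
          _ < (b + r_max) - (b - r_max) := by linarith
      · calc min (a + r_max) (b + r_max) - max (a - r_max) (b - r_max)
            ≤ (b + r_max) - (a - r_max) :=
              sub_le_sub (min_le_right _ _) (le_max_left _ _)
          _ < (b + r_max) - (b - r_max) := by linarith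
    have hlt : ENNReal.ofReal (min (a + r_max) (b + r_max) - max (a - r_max) (b - r_max))
        < ENNReal.ofReal ((b + r_max) - (b - r_max)) := by
      exact (ENNReal.ofReal_lt_ofReal_iff (by linarith)).mpr hdiff
    calc (ENNReal.ofReal ((b + r_max) - (b - r_max)))⁻¹ *
          ENNReal.ofReal (min (a + r_max) (b + r_max) - max (a - r_max) (b - r_max))
        < (ENNReal.ofReal ((b + r_max) - (b - r_max)))⁻¹ *
          ENNReal.ofReal ((b + r_max) - (b - r_max)) := by
          apply ENNReal.mul_lt_mul_right (by simpa using hr) (by simpa using hr) hlt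
      _ = 1 := ENNReal.inv_mul_cancel (by simpa using hr) ENNReal.ofReal_ne_top
  -- the witness value
  have hνfin : ν s ≠ ⊤ := hνs.ne_top
  have hd : (0:ℝ) < |(μ s).toReal - (ν s).toReal| := by
    have : (ν s).toReal < 1 := by
      have := ENNReal.toReal_lt_toReal hνfin ENNReal.one_ne_top |>.mpr hνs
      simpa using this
    rw [hμs]
    simp only [ENNReal.toReal_one]
    rw [abs_of_pos (by linarith)]
    linarith
  -- bounded above by 1
  have hbdd : BddAbove {d : ℝ | ∃ t : Set ℝ, MeasurableSet t ∧
      d = |(μ t).toReal - (ν t).toReal|} := by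
    refine ⟨1, ?_⟩
    rintro d ⟨t, htm, rfl⟩
    have h1 : (μ t).toReal ≤ 1 := by
      have := unif_le_one _ _ ha t htm
      rw [← hμ] at this
      exact (ENNReal.toReal_mono ENNReal.one_ne_top this).trans_eq ENNReal.toReal_one
    have h2 : (ν t).toReal ≤ 1 := by
      have := unif_le_one _ _ hb t htm
      rw [← hν] at this
      exact (ENNReal.toReal_mono ENNReal.one_ne_top this).trans_eq ENNReal.toReal_one
    have h3 : 0 ≤ (μ t).toReal := ENNReal.toReal_nonneg
    have h4 : 0 ≤ (ν t).toReal := ENNReal.toReal_nonneg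
    rw [abs_sub_le_iff]; constructor <;> linarith
  exact lt_csSup_of_lt hbdd ⟨s, hsm, rfl⟩ hd
end

section
/- Let M > 0 and let κ be a natural number with r_max = 2^κ. For any real numbers a, b with |a − b| ≤ M, the statistical distance between the uniform probability measure on [a − r_max, a + r_max] and the uniform probability measure on [b − r_max, b + r_max] is at most M·2^{−(κ+1)}. Hence, for plaintext differences bounded by a fixed M, the ciphertexts are statistically indistinguishable with security parameter κ: the statistical distance is bounded by a function of κ decaying like 2^{−κ}. -/
open MeasureTheory

/-- Shifting the window of an interval by `|a - b|` changes the mass of any set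
by at most `ofReal |a - b|`. -/
lemma volume_inter_Icc_shift_le (s : Set ℝ) (r a b : ℝ) :
    volume (s ∩ Set.Icc (a - r) (a + r)) ≤
      volume (s ∩ Set.Icc (b - r) (b + r)) + ENNReal.ofReal |a - b| := by
  have hsub : s ∩ Set.Icc (a - r) (a + r) ⊆
      (s ∩ Set.Icc (b - r) (b + r)) ∪ (Set.Ico (a - r) (b - r) ∪ Set.Ioc (b + r) (a + r)) := by
    intro x hx
    have hxs := hx.1
    have hx1 := hx.2.1
    have hx2 := hx.2.2
    by_cases h : x ∈ Set.Icc (b - r) (b + r)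
    · exact Or.inl ⟨hxs, h⟩
    · right
      rw [Set.mem_Icc, not_and_or, not_le, not_le] at h
      rcases h with h | h
      · exact Or.inl ⟨hx1, h⟩
      · exact Or.inr ⟨h, hx2⟩
  calc volume (s ∩ Set.Icc (a - r) (a + r))
      ≤ volume ((s ∩ Set.Icc (b - r) (b + r)) ∪
          (Set.Ico (a - r) (b - r) ∪ Set.Ioc (b + r) (a + r))) := measure_mono hsub
    _ ≤ volume (s ∩ Set.Icc (b - r) (b + r)) +
          volume (Set.Ico (a - r) (b - r) ∪ Set.Ioc (b + r) (a + r)) := measure_union_le _ _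
    _ ≤ volume (s ∩ Set.Icc (b - r) (b + r)) + ENNReal.ofReal |a - b| := by
        gcongr
        calc volume (Set.Ico (a - r) (b - r) ∪ Set.Ioc (b + r) (a + r))
            ≤ volume (Set.Ico (a - r) (b - r)) + volume (Set.Ioc (b + r) (a + r)) :=
              measure_union_le _ _
          _ ≤ ENNReal.ofReal |a - b| := by
              rw [Real.volume_Ico, Real.volume_Ioc]
              rcases le_total a b with h | h
              · have h1 : b - r - (a - r) = b - a := by ring
                have h2 : a + r - (b + r) = a - b := by ring
                rw [h1, h2, abs_of_nonpos (by linarith : a - b ≤ 0),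
                  ENNReal.ofReal_eq_zero.mpr (by linarith : a - b ≤ 0), add_zero]
                exact le_of_eq (by rw [neg_sub])
              · have h1 : b - r - (a - r) = b - a := by ring
                have h2 : a + r - (b + r) = a - b := by ring
                rw [h1, h2, abs_of_nonneg (by linarith : 0 ≤ a - b),
                  ENNReal.ofReal_eq_zero.mpr (by linarith : b - a ≤ 0), zero_add]

/-- With noise amplitude `r_max = 2^κ` chosen exponentially in the security
parameter `κ`, and plaintext differences bounded by `M`, the statistical
distance between the ciphertext distributions is at most `M · 2^{-(κ+1)}`:
statistical indistinguishability. -/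
theorem additive_noise_RT_statistically_indistinguishable
    (M : ℝ) (hM : 0 < M) (κ : ℕ) (r_max : ℝ) (hr : r_max = 2 ^ κ)
    (a b : ℝ) (hab : |a - b| ≤ M) :
    statDist (unif (a - r_max) (a + r_max)) (unif (b - r_max) (b + r_max)) ≤
      M / 2 ^ (κ + 1) := by
  have hr0 : (0:ℝ) < r_max := by rw [hr]; positivity
  have h2r : (0:ℝ) < 2 * r_max := by linarith
  have hpow : (2:ℝ) ^ (κ + 1) = 2 * r_max := by rw [hr, pow_succ]; ring
  apply Real.sSup_le
  · rintro d ⟨s, hs, rfl⟩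
    have hval : ∀ x : ℝ, (unif (x - r_max) (x + r_max) s).toReal
        = (volume (s ∩ Set.Icc (x - r_max) (x + r_max))).toReal / (2 * r_max) := by
      intro x
      rw [unif, Measure.smul_apply, smul_eq_mul, Measure.restrict_apply hs]
      have h2 : x + r_max - (x - r_max) = 2 * r_max := by ring
      rw [h2, ENNReal.toReal_mul, ENNReal.toReal_inv, ENNReal.toReal_ofReal h2r.le]
      ring
    set ma := volume (s ∩ Set.Icc (a - r_max) (a + r_max)) with hma
    set mb := volume (s ∩ Set.Icc (b - r_max) (b + r_max)) with hmb
    have hfa : ma ≠ ⊤ :=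
      ((measure_mono Set.inter_subset_right).trans_lt measure_Icc_lt_top).ne
    have hfb : mb ≠ ⊤ :=
      ((measure_mono Set.inter_subset_right).trans_lt measure_Icc_lt_top).ne
    have key : |ma.toReal - mb.toReal| ≤ |a - b| := by
      rw [abs_sub_le_iff]
      constructor
      · have := volume_inter_Icc_shift_le s r_max a b
        have h1 : ma.toReal ≤ (mb + ENNReal.ofReal |a - b|).toReal :=
          ENNReal.toReal_mono (by finiteness) this
        rwa [ENNReal.toReal_add hfb ENNReal.ofReal_ne_top,
          ENNReal.toReal_ofReal (abs_nonneg _), ← sub_le_iff_le_add'] at h1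
      · have := volume_inter_Icc_shift_le s r_max b a
        have h1 : mb.toReal ≤ (ma + ENNReal.ofReal |b - a|).toReal :=
          ENNReal.toReal_mono (by finiteness) this
        rwa [ENNReal.toReal_add hfa ENNReal.ofReal_ne_top,
          ENNReal.toReal_ofReal (abs_nonneg _), abs_sub_comm b a,
          ← sub_le_iff_le_add'] at h1
    rw [hval a, hval b, div_sub_div_same, abs_div, abs_of_pos h2r, hpow]
    gcongr
    exact key.trans hab
  · positivity
end

section
/- Let r_max, R_max > 0 and let x₁, x₂ be nonzero real numbers with r_max ≥ |x₁|·R_max and r_max ≥ |x₂|·R_max. For i ∈ {1,2}, let μ_i be the distribution of x_i·R + r, where R and r are independent random variables uniformly distributed on [−R_max, R_max] and [−r_max, r_max] respectively. Then the statistical distance between μ₁ and μ₂ equals (R_max/(4·r_max))·| |x₁| − |x₂| |. -/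
open MeasureTheory

open Set
open scoped ENNReal

noncomputable def dens (rm a y : ℝ) : ℝ :=
  max 0 (min a (y + rm) - max (-a) (y - rm)) / (4 * a * rm)

lemma smul_prod_smul (c d : ℝ≥0∞) (μ ν : Measure ℝ) [SFinite μ] [SFinite ν] :
    (c • μ).prod (d • ν) = (c * d) • (μ.prod ν) := by
  ext s hs
  rw [Measure.prod_apply hs, Measure.smul_apply, Measure.prod_apply hs,
    lintegral_smul_measure]
  simp only [Measure.smul_apply, smul_eq_mul]
  rw [lintegral_const_mul d (measurable_measure_prodMk_left hs)]
  ring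

lemma inner_vol_eq (rm Rm x : ℝ) (hr : 0 < rm) (hR : 0 < Rm) (hx : 0 < x) (y : ℝ) :
    (ENNReal.ofReal (Rm - -Rm))⁻¹ * (ENNReal.ofReal (rm - -rm))⁻¹
        * volume (Icc (-Rm) Rm ∩ Icc ((y - rm) / x) ((y + rm) / x))
      = ENNReal.ofReal (dens rm (x * Rm) y) := by
  rw [Icc_inter_Icc, Real.volume_Icc]
  set t : ℝ := min Rm ((y + rm) / x) - max (-Rm) ((y - rm) / x) with ht
  have hd : dens rm (x * Rm) y = max 0 t / (4 * Rm * rm) := by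
    have h1 : min (x * Rm) (y + rm) = x * min Rm ((y + rm) / x) := by
      rw [mul_min_of_nonneg _ _ hx.le, mul_div_cancel₀ _ hx.ne']
    have h2 : max (-(x * Rm)) (y - rm) = x * max (-Rm) ((y - rm) / x) := by
      rw [mul_max_of_nonneg _ _ hx.le, mul_div_cancel₀ _ hx.ne', mul_neg]
    unfold dens
    rw [h1, h2, ← mul_sub, ← ht]
    rw [show max 0 (x * t) = x * max 0 t by
      rw [mul_max_of_nonneg _ _ hx.le, mul_zero]]
    field_simp
  rw [hd]
  rw [ENNReal.ofReal_div_of_pos (by nlinarith : (0:ℝ) < 4 * Rm * rm)]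
  have hmax : ENNReal.ofReal (max 0 t) = ENNReal.ofReal t := by
    rcases le_total t 0 with h | h
    · rw [max_eq_left h, ENNReal.ofReal_of_nonpos h, ENNReal.ofReal_zero]
    · rw [max_eq_right h]
  rw [hmax]
  have h4 : ENNReal.ofReal (4 * Rm * rm)
      = ENNReal.ofReal (Rm - -Rm) * ENNReal.ofReal (rm - -rm) := by
    rw [← ENNReal.ofReal_mul (by linarith : (0:ℝ) ≤ Rm - -Rm)]
    congr 1; ring
  rw [h4, ENNReal.div_eq_inv_mul, ENNReal.mul_inv
    (Or.inl (by simp [ENNReal.ofReal_eq_zero]; linarith))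
    (Or.inl ENNReal.ofReal_ne_top), mul_assoc]

lemma map_unif_pos (rm Rm x : ℝ) (hr : 0 < rm) (hR : 0 < Rm) (hx : 0 < x) :
    Measure.map (fun p : ℝ × ℝ => x * p.1 + p.2) ((unif (-Rm) Rm).prod (unif (-rm) rm))
      = volume.withDensity (fun y => ENNReal.ofReal (dens rm (x * Rm) y)) := by
  have hg : Measurable (fun p : ℝ × ℝ => x * p.1 + p.2) := by fun_prop
  set I : Set ℝ := Icc (-Rm) Rm with hI
  set J : Set ℝ := Icc (-rm) rm with hJ
  have hImeas : MeasurableSet I := measurableSet_Icc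
  have hJmeas : MeasurableSet J := measurableSet_Icc
  ext s hs
  rw [Measure.map_apply hg hs, withDensity_apply _ hs]
  unfold unif
  rw [smul_prod_smul, Measure.prod_restrict, Measure.smul_apply, smul_eq_mul,
    Measure.restrict_apply (hg hs)]
  set T : Set (ℝ × ℝ) := ((fun p : ℝ × ℝ => x * p.1 + p.2) ⁻¹' s) ∩ (I ×ˢ J) with hT
  have hTmeas : MeasurableSet T := (hg hs).inter (hImeas.prod hJmeas)
  -- step 1 : write the measure of T as an iterated integral of indicators
  have step1 : (volume.prod volume) T
      = ∫⁻ R, ∫⁻ r, I.indicator 1 R * (J.indicator 1 r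
          * s.indicator (1 : ℝ → ℝ≥0∞) (x * R + r)) ∂volume ∂volume := by
    rw [← lintegral_indicator_one hTmeas, lintegral_prod]
    · congr 1; funext R; congr 1; funext r
      by_cases h1 : R ∈ I <;> by_cases h2 : r ∈ J <;>
        by_cases h3 : x * R + r ∈ s <;>
        simp [T, Set.indicator_apply, h1, h2, h3]
    · exact (measurable_one.indicator hTmeas).aemeasurable
  -- measurability helpers
  have hmeasJ : ∀ c : ℝ, Measurable (fun r : ℝ => J.indicator (1 : ℝ → ℝ≥0∞) r
      * s.indicator 1 (c + r)) := by
    intro c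
    exact (measurable_one.indicator hJmeas).mul
      ((measurable_one.indicator hs).comp (measurable_const.add measurable_id))
  -- step 2 : translate the inner integral
  have step2 : ∀ R : ℝ, (∫⁻ r, J.indicator (1 : ℝ → ℝ≥0∞) r
        * s.indicator 1 (x * R + r) ∂volume)
      = ∫⁻ y, J.indicator 1 (y - x * R) * s.indicator (1 : ℝ → ℝ≥0∞) y ∂volume := by
    intro R
    have := lintegral_add_right_eq_self
      (μ := (volume : Measure ℝ))
      (fun y => J.indicator (1 : ℝ → ℝ≥0∞) (y - x * R) * s.indicator 1 y) (x * R)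
    rw [← this]
    congr 1; funext r
    rw [add_sub_cancel_right, add_comm]
  -- step 3 : rewrite double integral with translated inner integral
  have hKiff : ∀ y R : ℝ, (y - x * R ∈ J) ↔ R ∈ Icc ((y - rm) / x) ((y + rm) / x) := by
    intro y R
    simp only [hJ, mem_Icc]
    rw [div_le_iff₀ hx, le_div_iff₀ hx]
    constructor <;> rintro ⟨h1, h2⟩ <;> constructor <;> linarith
  have hmeas2 : ∀ R : ℝ, Measurable (fun y : ℝ => J.indicator (1 : ℝ → ℝ≥0∞) (y - x * R)
      * s.indicator 1 y) := by
    intro R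
    exact ((measurable_one.indicator hJmeas).comp (measurable_id.sub measurable_const)).mul
      (measurable_one.indicator hs)
  have step3 : (∫⁻ R, ∫⁻ r, I.indicator 1 R * (J.indicator 1 r
          * s.indicator (1 : ℝ → ℝ≥0∞) (x * R + r)) ∂volume ∂volume)
      = ∫⁻ R, ∫⁻ y, I.indicator 1 R * (J.indicator 1 (y - x * R)
          * s.indicator (1 : ℝ → ℝ≥0∞) y) ∂volume ∂volume := by
    congr 1; funext R
    rw [lintegral_const_mul _ (hmeasJ (x * R)), lintegral_const_mul _ (hmeas2 R), step2 R]
  -- step 4 : swap the integrals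
  have hmeasP : Measurable (fun z : ℝ × ℝ => I.indicator 1 z.1
      * (J.indicator 1 (z.2 - x * z.1) * s.indicator (1 : ℝ → ℝ≥0∞) z.2)) := by
    apply ((measurable_one.indicator hImeas).comp measurable_fst).mul
    apply Measurable.mul
    · exact (measurable_one.indicator hJmeas).comp
        (measurable_snd.sub (measurable_const.mul measurable_fst))
    · exact (measurable_one.indicator hs).comp measurable_snd
  have step4 : (∫⁻ R, ∫⁻ y, I.indicator 1 R * (J.indicator 1 (y - x * R)
          * s.indicator (1 : ℝ → ℝ≥0∞) y) ∂volume ∂volume)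
      = ∫⁻ y, ∫⁻ R, I.indicator 1 R * (J.indicator 1 (y - x * R)
          * s.indicator (1 : ℝ → ℝ≥0∞) y) ∂volume ∂volume :=
    lintegral_lintegral_swap hmeasP.aemeasurable
  -- step 5 : compute the inner integral over R
  have step5 : ∀ y : ℝ, (∫⁻ R, I.indicator 1 R * (J.indicator 1 (y - x * R)
          * s.indicator (1 : ℝ → ℝ≥0∞) y) ∂volume)
      = s.indicator (1 : ℝ → ℝ≥0∞) y
        * volume (I ∩ Icc ((y - rm) / x) ((y + rm) / x)) := by
    intro y
    set K : Set ℝ := Icc ((y - rm) / x) ((y + rm) / x) with hKdef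
    have h1 : ∀ R : ℝ, I.indicator 1 R * (J.indicator 1 (y - x * R)
          * s.indicator (1 : ℝ → ℝ≥0∞) y)
        = s.indicator (1 : ℝ → ℝ≥0∞) y * (I ∩ K).indicator 1 R := by
      intro R
      by_cases hR1 : R ∈ I <;> by_cases hR2 : R ∈ K <;> by_cases hy : y ∈ s <;>
        simp [indicator_apply, hR1, hR2, hy, (hKiff y R), mem_inter_iff, ← hKdef]
    simp_rw [h1]
    rw [lintegral_const_mul _ (measurable_one.indicator (hImeas.inter measurableSet_Icc)),
      lintegral_indicator_one (hImeas.inter measurableSet_Icc)]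
  simp_rw [step1, step3, step4, step5]
  -- step 6 : move the indicator into a set integral and finish pointwise
  have step6 : (∫⁻ y, s.indicator (1 : ℝ → ℝ≥0∞) y
        * volume (I ∩ Icc ((y - rm) / x) ((y + rm) / x)) ∂volume)
      = ∫⁻ y in s, volume (I ∩ Icc ((y - rm) / x) ((y + rm) / x)) ∂volume := by
    rw [← lintegral_indicator hs]
    congr 1; funext y
    by_cases hy : y ∈ s <;> simp [indicator_apply, hy]
  rw [step6]
  have hGmeas : Measurable (fun y : ℝ =>
      volume (I ∩ Icc ((y - rm) / x) ((y + rm) / x))) := by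
    have : (fun y : ℝ => volume (I ∩ Icc ((y - rm) / x) ((y + rm) / x)))
        = fun y : ℝ => ENNReal.ofReal (min Rm ((y + rm) / x) - max (-Rm) ((y - rm) / x)) := by
      funext y; rw [hI, Icc_inter_Icc, Real.volume_Icc]
    rw [this]
    apply Measurable.ennreal_ofReal
    fun_prop
  rw [← lintegral_const_mul _ hGmeas]
  exact lintegral_congr fun y => inner_vol_eq rm Rm x hr hR hx y


instance unif_sfinite (a b : ℝ) : SFinite (unif a b) := by
  unfold unif; infer_instance

lemma unif_neg_invariant (Rm : ℝ) :
    Measure.map Neg.neg (unif (-Rm) Rm) = unif (-Rm) Rm := by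
  unfold unif
  rw [Measure.map_smul]
  congr 1
  have hpre : Icc (-Rm) Rm = Neg.neg ⁻¹' (Icc (-Rm) Rm) := by
    ext z; simp [mem_Icc]
  calc Measure.map Neg.neg (volume.restrict (Icc (-Rm) Rm))
      = Measure.map Neg.neg (volume.restrict (Neg.neg ⁻¹' (Icc (-Rm) Rm))) := by rw [← hpre]
    _ = (Measure.map Neg.neg volume).restrict (Icc (-Rm) Rm) :=
        (Measure.restrict_map measurable_neg measurableSet_Icc).symm
    _ = volume.restrict (Icc (-Rm) Rm) := by rw [Measure.map_neg_eq_self]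

lemma map_unif_eq (rm Rm x : ℝ) (hr : 0 < rm) (hR : 0 < Rm) (hx : x ≠ 0) :
    Measure.map (fun p : ℝ × ℝ => x * p.1 + p.2) ((unif (-Rm) Rm).prod (unif (-rm) rm))
      = volume.withDensity (fun y => ENNReal.ofReal (dens rm (|x| * Rm) y)) := by
  rcases hx.lt_or_gt with hneg | hpos
  · have habs : |x| = -x := abs_of_neg hneg
    rw [habs]
    have hcomp : (fun p : ℝ × ℝ => x * p.1 + p.2)
        = (fun p : ℝ × ℝ => (-x) * p.1 + p.2) ∘ (Prod.map (Neg.neg : ℝ → ℝ) id) := by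
      funext p; show x * p.1 + p.2 = -x * (-p.1) + p.2; ring
    rw [hcomp, ← Measure.map_map (by fun_prop) (by fun_prop)]
    rw [← Measure.map_prod_map _ _ measurable_neg measurable_id]
    rw [unif_neg_invariant, Measure.map_id]
    exact map_unif_pos rm Rm (-x) hr hR (by linarith)
  · rw [abs_of_pos hpos]
    exact map_unif_pos rm Rm x hr hR hpos

lemma unif_prob (a b : ℝ) (h : a < b) : IsProbabilityMeasure (unif a b) := by
  constructor
  unfold unif
  rw [Measure.smul_apply, Measure.restrict_apply MeasurableSet.univ, Set.univ_inter,
    Real.volume_Icc, smul_eq_mul]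
  exact ENNReal.inv_mul_cancel (by simp [ENNReal.ofReal_eq_zero]; linarith)
    ENNReal.ofReal_ne_top

lemma dens_nonneg (rm a y : ℝ) (hr : 0 < rm) (ha : 0 < a) : 0 ≤ dens rm a y :=
  div_nonneg (le_max_left _ _) (by nlinarith)

lemma dens_continuous (rm a : ℝ) : Continuous (dens rm a) := by
  unfold dens
  exact ((continuous_const.max (((continuous_const.min (continuous_id.add
    continuous_const))).sub (continuous_const.max (continuous_id.sub
    continuous_const))))).div_const _

lemma dens_compact_support (rm a : ℝ) (hr : 0 < rm) (ha : 0 < a) :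
    HasCompactSupport (dens rm a) := by
  apply HasCompactSupport.intro (isCompact_Icc (a := -(a + rm)) (b := a + rm))
  intro y hy
  simp only [mem_Icc, not_and_or, not_le] at hy
  unfold dens
  rw [max_eq_left, zero_div]
  rcases hy with h | h
  · have h1 : min a (y + rm) ≤ y + rm := min_le_right _ _
    have h2 : -a ≤ max (-a) (y - rm) := le_max_left _ _
    linarith
  · have h1 : min a (y + rm) ≤ a := min_le_left _ _
    have h2 : y - rm ≤ max (-a) (y - rm) := le_max_right _ _
    linarith

lemma dens_integrable (rm a : ℝ) (hr : 0 < rm) (ha : 0 < a) :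
    Integrable (dens rm a) :=
  (dens_continuous rm a).integrable_of_hasCompactSupport (dens_compact_support rm a hr ha)

lemma dens_even (rm a y : ℝ) : dens rm a (-y) = dens rm a y := by
  unfold dens
  congr 2
  have e1 : max (-a) (-y - rm) = -min a (y + rm) := by
    rw [← max_neg_neg]; congr 1; ring
  have e2 : max (-a) (y - rm) = -min a (rm - y) := by
    rw [← max_neg_neg]; congr 1; ring
  rw [e1, e2]
  have : min a (-y + rm) = min a (rm - y) := by ring_nf
  rw [this]; ring

lemma int_lin (α β u v : ℝ) :
    ∫ y in u..v, (α * y + β) = α * (v ^ 2 - u ^ 2) / 2 + β * (v - u) := by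
  rw [intervalIntegral.integral_add
    (((by fun_prop : Continuous fun y : ℝ => α * y)).intervalIntegrable u v)
    (intervalIntegrable_const), intervalIntegral.integral_const_mul, integral_id,
    intervalIntegral.integral_const, smul_eq_mul]
  ring

lemma posPart_integral (rm a₁ a₂ : ℝ) (hr : 0 < rm) (h1 : 0 < a₁) (h12 : a₁ ≤ a₂)
    (h2 : a₂ ≤ rm) :
    ∫ y, max 0 (dens rm a₁ y - dens rm a₂ y) = (a₂ - a₁) / (4 * rm) := by
  have h1' : 0 < a₂ := lt_of_lt_of_le h1 h12
  set h : ℝ → ℝ := fun y => max 0 (dens rm a₁ y - dens rm a₂ y) with hh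
  have hcont : Continuous h :=
    continuous_const.max ((dens_continuous rm a₁).sub (dens_continuous rm a₂))
  have hii : ∀ u v : ℝ, IntervalIntegrable h volume u v := fun u v =>
    hcont.intervalIntegrable u v
  -- vanishing for rm ≤ y
  have claim : ∀ y : ℝ, rm ≤ y → h y = 0 := by
    intro y hy
    have hfg : dens rm a₁ y ≤ dens rm a₂ y := by
      unfold dens
      rw [min_eq_left (by linarith), min_eq_left (by linarith),
        max_eq_right (by linarith : -a₁ ≤ y - rm),
        max_eq_right (by linarith : -a₂ ≤ y - rm)]
      rcases le_total (a₁ - (y - rm)) 0 with hc | hc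
      · rw [max_eq_left hc, zero_div]
        exact div_nonneg (le_max_left _ _) (by nlinarith)
      · rw [max_eq_right hc, max_eq_right (by linarith)]
        rw [div_le_div_iff₀ (by nlinarith) (by nlinarith)]
        nlinarith [mul_nonneg (sub_nonneg.2 hy) (sub_nonneg.2 h12)]
    simp only [hh]
    exact max_eq_left (by linarith)
  have claim' : ∀ y : ℝ, y ≤ -rm → h y = 0 := by
    intro y hy
    have : h y = h (-y) := by
      simp only [hh]
      rw [← dens_even rm a₁ y, ← dens_even rm a₂ y]
    rw [this]
    exact claim (-y) (by linarith)
  -- restrict to [-rm, rm]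
  have stepA : ∫ y, h y = ∫ y in (-rm)..rm, h y := by
    rw [intervalIntegral.integral_of_le (by linarith : -rm ≤ rm),
      ← integral_Icc_eq_integral_Ioc]
    refine (setIntegral_eq_integral_of_forall_compl_eq_zero ?_).symm
    intro y hy
    simp only [mem_Icc, not_and_or, not_le] at hy
    rcases hy with hy | hy
    · exact claim' y (by linarith)
    · exact claim y (by linarith)
  -- piecewise formulas
  have piece5 : EqOn h (fun y => (-((a₂ - a₁) / (4 * a₁ * a₂ * rm))) * y
      + ((a₂ - a₁) / (4 * a₁ * a₂ * rm)) * rm) (uIcc (rm - a₁) rm) := by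
    intro y hy
    rw [uIcc_of_le (by linarith)] at hy
    obtain ⟨hy1, hy2⟩ := hy
    have hf : dens rm a₁ y = (a₁ + rm - y) / (4 * a₁ * rm) := by
      unfold dens
      rw [min_eq_left (by linarith), max_eq_right (by linarith : -a₁ ≤ y - rm),
        max_eq_right (by linarith : (0:ℝ) ≤ a₁ - (y - rm))]
      congr 1; ring
    have hg : dens rm a₂ y = (a₂ + rm - y) / (4 * a₂ * rm) := by
      unfold dens
      rw [min_eq_left (by linarith), max_eq_right (by linarith : -a₂ ≤ y - rm),
        max_eq_right (by linarith : (0:ℝ) ≤ a₂ - (y - rm))]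
      congr 1; ring
    simp only [hh, hf, hg]
    rw [max_eq_right]
    · field_simp
      ring
    · rw [sub_nonneg, div_le_div_iff₀ (by nlinarith) (by nlinarith)]
      nlinarith [mul_nonneg (sub_nonneg.2 hy2) (sub_nonneg.2 h12)]
  have piece4 : EqOn h (fun y => (1 / (4 * a₂ * rm)) * y
      + (1 / (4 * a₂ * rm)) * (a₂ - rm)) (uIcc (rm - a₂) (rm - a₁)) := by
    intro y hy
    rw [uIcc_of_le (by linarith)] at hy
    obtain ⟨hy1, hy2⟩ := hy
    have hf : dens rm a₁ y = 1 / (2 * rm) := by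
      unfold dens
      rw [min_eq_left (by linarith), max_eq_left (by linarith : y - rm ≤ -a₁),
        max_eq_right (by linarith : (0:ℝ) ≤ a₁ - -a₁)]
      field_simp
      ring
    have hg : dens rm a₂ y = (a₂ + rm - y) / (4 * a₂ * rm) := by
      unfold dens
      rw [min_eq_left (by linarith), max_eq_right (by linarith : -a₂ ≤ y - rm),
        max_eq_right (by linarith : (0:ℝ) ≤ a₂ - (y - rm))]
      congr 1; ring
    simp only [hh, hf, hg]
    rw [max_eq_right]
    · field_simp
      ring
    · rw [sub_nonneg, div_le_div_iff₀ (by nlinarith) (by nlinarith)]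
      nlinarith
  have piece3 : EqOn h (fun _ => 0) (uIcc (a₂ - rm) (rm - a₂)) := by
    intro y hy
    rw [uIcc_of_le (by linarith)] at hy
    obtain ⟨hy1, hy2⟩ := hy
    have hf : dens rm a₁ y = 1 / (2 * rm) := by
      unfold dens
      rw [min_eq_left (by linarith), max_eq_left (by linarith : y - rm ≤ -a₁),
        max_eq_right (by linarith : (0:ℝ) ≤ a₁ - -a₁)]
      field_simp
      ring
    have hg : dens rm a₂ y = 1 / (2 * rm) := by
      unfold dens
      rw [min_eq_left (by linarith), max_eq_left (by linarith : y - rm ≤ -a₂),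
        max_eq_right (by linarith : (0:ℝ) ≤ a₂ - -a₂)]
      field_simp
      ring
    simp only [hh, hf, hg, sub_self, max_self]
  -- symmetry for the two left pieces
  have heven : ∀ y : ℝ, h (-y) = h y := by
    intro y
    simp only [hh]
    rw [dens_even, dens_even]
  have symm15 : ∫ y in (-rm)..(a₁ - rm), h y = ∫ y in (rm - a₁)..rm, h y := by
    have e := intervalIntegral.integral_comp_neg (a := rm - a₁) (b := rm) (f := h)
    simp only [heven] at e
    rw [show a₁ - rm = -(rm - a₁) from by ring]
    exact e.symm
  have symm24 : ∫ y in (a₁ - rm)..(a₂ - rm), h y = ∫ y in (rm - a₂)..(rm - a₁), h y := by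
    have e := intervalIntegral.integral_comp_neg (a := rm - a₂) (b := rm - a₁) (f := h)
    simp only [heven] at e
    rw [show a₁ - rm = -(rm - a₁) from by ring, show a₂ - rm = -(rm - a₂) from by ring]
    exact e.symm
  -- split the integral
  have split : ∫ y in (-rm)..rm, h y
      = (∫ y in (-rm)..(a₁ - rm), h y) + ((∫ y in (a₁ - rm)..(a₂ - rm), h y)
        + ((∫ y in (a₂ - rm)..(rm - a₂), h y) + ((∫ y in (rm - a₂)..(rm - a₁), h y)
        + (∫ y in (rm - a₁)..rm, h y)))) := by
    rw [intervalIntegral.integral_add_adjacent_intervals (hii _ _) (hii _ _),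
      intervalIntegral.integral_add_adjacent_intervals (hii _ _) (hii _ _),
      intervalIntegral.integral_add_adjacent_intervals (hii _ _) (hii _ _),
      intervalIntegral.integral_add_adjacent_intervals (hii _ _) (hii _ _)]
  rw [stepA, split, symm15, symm24,
    intervalIntegral.integral_congr piece3, intervalIntegral.integral_congr piece4,
    intervalIntegral.integral_congr piece5, intervalIntegral.integral_const,
    int_lin, int_lin]
  simp only [smul_eq_mul, mul_zero]
  field_simp
  ring

lemma withDensity_toReal {f : ℝ → ℝ} (hf : Integrable f) (h0 : ∀ y, 0 ≤ f y)
    {s : Set ℝ} (hs : MeasurableSet s) :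
    ((volume.withDensity fun y => ENNReal.ofReal (f y)) s).toReal = ∫ y in s, f y := by
  rw [withDensity_apply _ hs,
    ← ofReal_integral_eq_lintegral_ofReal hf.integrableOn
      (Filter.Eventually.of_forall fun y => h0 y),
    ENNReal.toReal_ofReal (setIntegral_nonneg hs fun y _ => h0 y)]

lemma statDist_dens (rm a₁ a₂ : ℝ) (hr : 0 < rm) (h1 : 0 < a₁) (h12 : a₁ ≤ a₂)
    (h2 : a₂ ≤ rm)
    (hP1 : (volume.withDensity fun y => ENNReal.ofReal (dens rm a₁ y)) Set.univ = 1)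
    (hP2 : (volume.withDensity fun y => ENNReal.ofReal (dens rm a₂ y)) Set.univ = 1) :
    statDist (volume.withDensity fun y => ENNReal.ofReal (dens rm a₁ y))
        (volume.withDensity fun y => ENNReal.ofReal (dens rm a₂ y))
      = (a₂ - a₁) / (4 * rm) := by
  have h1' : 0 < a₂ := lt_of_lt_of_le h1 h12
  set f : ℝ → ℝ := dens rm a₁ with hfdef
  set g : ℝ → ℝ := dens rm a₂ with hgdef
  have hfInt : Integrable f := dens_integrable rm a₁ hr h1
  have hgInt : Integrable g := dens_integrable rm a₂ hr h1'
  have hf0 : ∀ y, 0 ≤ f y := fun y => dens_nonneg rm a₁ y hr h1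
  have hg0 : ∀ y, 0 ≤ g y := fun y => dens_nonneg rm a₂ y hr h1'
  set h : ℝ → ℝ := fun y => max 0 (f y - g y) with hhdef
  have hInt_h : Integrable h := by
    have he : h = fun a => max (f a - g a) 0 := by
      funext y; simp [hhdef, max_comm]
    rw [he]; exact (hfInt.sub hgInt).pos_part
  have hh0 : ∀ y, 0 ≤ h y := fun y => le_max_left _ _
  have Hmain : ∫ y, h y = (a₂ - a₁) / (4 * rm) :=
    posPart_integral rm a₁ a₂ hr h1 h12 h2
  -- ∫ f = ∫ g = 1
  have hIf : ∫ y, f y = 1 := by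
    have := withDensity_toReal hfInt hf0 MeasurableSet.univ
    rw [hP1] at this
    simpa [setIntegral_univ] using this.symm
  have hIg : ∫ y, g y = 1 := by
    have := withDensity_toReal hgInt hg0 MeasurableSet.univ
    rw [hP2] at this
    simpa [setIntegral_univ] using this.symm
  -- the mirrored positive part has the same integral
  set h' : ℝ → ℝ := fun y => max 0 (g y - f y) with hh'def
  have hInt_h' : Integrable h' := by
    have he : h' = fun a => max (g a - f a) 0 := by
      funext y; simp [hh'def, max_comm]
    rw [he]; exact (hgInt.sub hfInt).pos_part
  have hIh' : ∫ y, h' y = ∫ y, h y := by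
    have hpt : ∀ y, h' y = h y - (f y - g y) := by
      intro y
      simp only [hhdef, hh'def]
      rcases le_total (f y - g y) 0 with hc | hc
      · rw [max_eq_left hc, max_eq_right (by linarith)]; ring
      · rw [max_eq_right hc, max_eq_left (by linarith)]; ring
    calc ∫ y, h' y = ∫ y, (h y - (f y - g y)) := by
          exact integral_congr_ae (Filter.Eventually.of_forall hpt)
      _ = (∫ y, h y) - ∫ y, (f y - g y) := integral_sub hInt_h (hfInt.sub hgInt)
      _ = ∫ y, h y := by
          rw [integral_sub hfInt hgInt, hIf, hIg]; ring
  -- upper bound for all measurable sets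
  have hub : ∀ s : Set ℝ, MeasurableSet s →
      |(∫ y in s, f y) - ∫ y in s, g y| ≤ ∫ y, h y := by
    intro s hs
    rw [abs_sub_le_iff]
    constructor
    · calc (∫ y in s, f y) - ∫ y in s, g y = ∫ y in s, (f y - g y) :=
            (integral_sub hfInt.integrableOn hgInt.integrableOn).symm
        _ ≤ ∫ y in s, h y := by
            apply setIntegral_mono_on (hfInt.sub hgInt).integrableOn hInt_h.integrableOn hs
            intro y _
            exact le_max_right _ _
        _ ≤ ∫ y, h y := setIntegral_le_integral hInt_h
            (Filter.Eventually.of_forall hh0)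
    · calc (∫ y in s, g y) - ∫ y in s, f y = ∫ y in s, (g y - f y) :=
            (integral_sub hgInt.integrableOn hfInt.integrableOn).symm
        _ ≤ ∫ y in s, h' y := by
            apply setIntegral_mono_on (hgInt.sub hfInt).integrableOn hInt_h'.integrableOn hs
            intro y _
            exact le_max_right _ _
        _ ≤ ∫ y, h' y := setIntegral_le_integral hInt_h'
            (Filter.Eventually.of_forall fun y => le_max_left _ _)
        _ = ∫ y, h y := hIh'
  -- the optimal set
  set s₀ : Set ℝ := {y | g y < f y} with hs₀def
  have hs₀ : MeasurableSet s₀ :=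
    measurableSet_lt (dens_continuous rm a₂).measurable (dens_continuous rm a₁).measurable
  have hopt : (∫ y in s₀, f y) - ∫ y in s₀, g y = ∫ y, h y := by
    rw [← integral_sub hfInt.integrableOn hgInt.integrableOn]
    rw [← integral_indicator hs₀]
    congr 1
    funext y
    by_cases hy : y ∈ s₀
    · rw [Set.indicator_of_mem hy]
      have : g y < f y := hy
      simp only [hhdef]
      rw [max_eq_right (by linarith)]
    · rw [Set.indicator_of_notMem hy]
      have : ¬ g y < f y := hy
      simp only [hhdef]
      rw [max_eq_left (by linarith)]
  have hD0 : 0 ≤ ∫ y, h y := integral_nonneg hh0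
  -- compute the sSup
  unfold statDist
  apply le_antisymm
  · apply csSup_le
    · exact ⟨0, ∅, MeasurableSet.empty, by simp⟩
    rintro d ⟨s, hs, rfl⟩
    rw [withDensity_toReal hfInt hf0 hs, withDensity_toReal hgInt hg0 hs]
    rw [← Hmain]
    exact hub s hs
  · apply le_csSup
    · refine ⟨(a₂ - a₁) / (4 * rm), ?_⟩
      rintro d ⟨s, hs, rfl⟩
      rw [withDensity_toReal hfInt hf0 hs, withDensity_toReal hgInt hg0 hs, ← Hmain]
      exact hub s hs
    · refine ⟨s₀, hs₀, ?_⟩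
      rw [withDensity_toReal hfInt hf0 hs₀, withDensity_toReal hgInt hg0 hs₀, ← Hmain,
        hopt, abs_of_nonneg hD0]

lemma statDist_comm' (μ ν : Measure ℝ) : statDist μ ν = statDist ν μ := by
  unfold statDist
  congr 1
  ext d
  constructor <;> rintro ⟨s, hs, rfl⟩ <;> exact ⟨s, hs, abs_sub_comm _ _⟩

lemma withDensity_dens_univ (rm Rm x : ℝ) (hr : 0 < rm) (hR : 0 < Rm) (hx : x ≠ 0) :
    (volume.withDensity fun y => ENNReal.ofReal (dens rm (|x| * Rm) y)) Set.univ = 1 := by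
  rw [← map_unif_eq rm Rm x hr hR hx]
  haveI := unif_prob (-Rm) Rm (by linarith)
  haveI := unif_prob (-rm) rm (by linarith)
  haveI : IsProbabilityMeasure
      (Measure.map (fun p : ℝ × ℝ => x * p.1 + p.2) ((unif (-Rm) Rm).prod (unif (-rm) rm))) :=
    Measure.isProbabilityMeasure_map (by fun_prop)
  exact measure_univ


/-- For the scalar probabilistic RT cipher `y = x·R + r` with `R`, `r`
independent and uniform on `[−R_max, R_max]` and `[−r_max, r_max]`, the
statistical distance of the ciphertext distributions of two nonzero
plaintexts `x₁, x₂` (with `r_max ≥ |xᵢ|·R_max`) equals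
`(R_max/(4·r_max))·||x₁| − |x₂||`. -/
theorem statDist_scalar_RT_cipher (r_max R_max x₁ x₂ : ℝ)
    (hr : 0 < r_max) (hR : 0 < R_max) (hx₁ : x₁ ≠ 0) (hx₂ : x₂ ≠ 0)
    (hb₁ : |x₁| * R_max ≤ r_max) (hb₂ : |x₂| * R_max ≤ r_max) :
    statDist
        (Measure.map (fun p : ℝ × ℝ => x₁ * p.1 + p.2)
          ((unif (-R_max) R_max).prod (unif (-r_max) r_max)))
        (Measure.map (fun p : ℝ × ℝ => x₂ * p.1 + p.2)
          ((unif (-R_max) R_max).prod (unif (-r_max) r_max))) =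
      (R_max / (4 * r_max)) * abs (|x₁| - |x₂|) := by
  have ha₁ : 0 < |x₁| * R_max := mul_pos (abs_pos.2 hx₁) hR
  have ha₂ : 0 < |x₂| * R_max := mul_pos (abs_pos.2 hx₂) hR
  rw [map_unif_eq r_max R_max x₁ hr hR hx₁, map_unif_eq r_max R_max x₂ hr hR hx₂]
  rcases le_total |x₁| |x₂| with hle | hle
  · have h12 : |x₁| * R_max ≤ |x₂| * R_max := mul_le_mul_of_nonneg_right hle hR.le
    rw [statDist_dens r_max (|x₁| * R_max) (|x₂| * R_max) hr ha₁ h12 hb₂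
      (withDensity_dens_univ r_max R_max x₁ hr hR hx₁)
      (withDensity_dens_univ r_max R_max x₂ hr hR hx₂)]
    have habs : |(|x₁| - |x₂|)| = |x₂| - |x₁| := by
      rw [abs_of_nonpos (by linarith : |x₁| - |x₂| ≤ 0)]; ring
    rw [habs, div_mul_eq_mul_div]
    congr 1
    ring
  · have h12 : |x₂| * R_max ≤ |x₁| * R_max := mul_le_mul_of_nonneg_right hle hR.le
    rw [statDist_comm']
    rw [statDist_dens r_max (|x₂| * R_max) (|x₁| * R_max) hr ha₂ h12 hb₁
      (withDensity_dens_univ r_max R_max x₂ hr hR hx₂)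
      (withDensity_dens_univ r_max R_max x₁ hr hR hx₁)]
    have habs : |(|x₁| - |x₂|)| = |x₁| - |x₂| :=
      abs_of_nonneg (by linarith : (0:ℝ) ≤ |x₁| - |x₂|)
    rw [habs, div_mul_eq_mul_div]
    congr 1
    ring
end

section
/- Consider the linear dynamics x(k+1) = A·x(k) + B·u(k) with A ∈ ℝ^{n×n}, B ∈ ℝ^{n×m}, encrypted state y(k) = R·x(k) + r with R ∈ ℝ^{n×n} invertible and r ∈ ℝⁿ, and encrypted input z(k) = S·u(k) + s with S ∈ ℝ^{m×m} invertible and s ∈ ℝᵐ. Define the ciphertext differences Δy(k) = y(k+1) − y(k) and Δz(k) = z(k+1) − z(k). Then for all k, Δy(k+1) = R·A·R⁻¹·Δy(k) + R·B·S⁻¹·Δz(k); i.e., the ciphertext differences satisfy linear dynamics with system matrix V = R·A·R⁻¹ and input matrix W = R·B·S⁻¹. -/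
/-- Known-plant attack: for the plant `x(k+1) = A·x(k) + B·u(k)` with
encrypted state `y(k) = R·x(k) + r` and encrypted input `z(k) = S·u(k) + s`
(`R`, `S` invertible), the ciphertext differences `Δy(k) = y(k+1) − y(k)`
and `Δz(k) = z(k+1) − z(k)` obey the linear ciphertext dynamics
`Δy(k+1) = R·A·R⁻¹·Δy(k) + R·B·S⁻¹·Δz(k)`. -/
theorem ciphertext_difference_dynamics {n m : ℕ}
    (A : Matrix (Fin n) (Fin n) ℝ) (B : Matrix (Fin n) (Fin m) ℝ)
    (R : Matrix (Fin n) (Fin n) ℝ) (hR : IsUnit R.det) (r : Fin n → ℝ)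
    (S : Matrix (Fin m) (Fin m) ℝ) (hS : IsUnit S.det) (s : Fin m → ℝ)
    (x : ℕ → Fin n → ℝ) (u : ℕ → Fin m → ℝ)
    (hdyn : ∀ k, x (k + 1) = A.mulVec (x k) + B.mulVec (u k))
    (y : ℕ → Fin n → ℝ) (hy : ∀ k, y k = R.mulVec (x k) + r)
    (z : ℕ → Fin m → ℝ) (hz : ∀ k, z k = S.mulVec (u k) + s)
    (Δy : ℕ → Fin n → ℝ) (hΔy : ∀ k, Δy k = y (k + 1) - y k)
    (Δz : ℕ → Fin m → ℝ) (hΔz : ∀ k, Δz k = z (k + 1) - z k) :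
    ∀ k, Δy (k + 1) = (R * A * R⁻¹).mulVec (Δy k) + (R * B * S⁻¹).mulVec (Δz k) := by
  intro k
  have hΔyx : ∀ j, Δy j = R.mulVec (x (j + 1) - x j) := by
    intro j
    rw [hΔy, hy, hy, Matrix.mulVec_sub]
    abel
  have hΔzu : ∀ j, Δz j = S.mulVec (u (j + 1) - u j) := by
    intro j
    rw [hΔz, hz, hz, Matrix.mulVec_sub]
    abel
  have e1 : R * A * R⁻¹ * R = R * A := by
    rw [Matrix.mul_assoc (R * A), Matrix.nonsing_inv_mul R hR, Matrix.mul_one]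
  have e2 : R * B * S⁻¹ * S = R * B := by
    rw [Matrix.mul_assoc (R * B), Matrix.nonsing_inv_mul S hS, Matrix.mul_one]
  rw [hΔyx, hΔyx, hΔzu, Matrix.mulVec_mulVec, Matrix.mulVec_mulVec, e1, e2,
    ← Matrix.mulVec_mulVec, ← Matrix.mulVec_mulVec, ← Matrix.mulVec_add]
  simp only [hdyn, Matrix.mulVec_add, Matrix.mulVec_sub]
  abel
end
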